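/- Let $\Omega \subseteq \mathbb{R}^n$ be open and convex and let $c : \mathbb{R}^n \to \mathbb{R}^m$ be differentiable on $\Omega$ with Jacobian $J(\cdot)$ Lipschitz continuous on $\Omega$ (in operator norm) with constant $L > 0$. Let $x \in \Omega$, let $v, t \in \mathbb{R}^n$ and $d = v + t$, let $h^{\max} > 0$ and $\kappa_1 \in (0,1)$, and assume $\|c(x)\| \le h^{\max}$, $\|c(x) + J(x)v\| < h^{\max}$, and $\|J(x)t\| \le \kappa_1\left(h^{\max} - \|c(x) + J(x)v\|\right)$. Then for every $\alpha \in (0,1]$ with $x + \alpha d \in \Omega$ and $\alpha L\|d\|^2 \le (1-\kappa_1)\left(h^{\max} - \|c(x) + J(x)v\|\right)$, one has $\|c(x + \alpha d)\| \le h^{\max}$. -/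

import Mathlib

/-- Funnel-bound preservation for `f`-iterations: under the Lipschitz-Jacobian assumption,
if `‖c(x)‖ ≤ hmax`, `‖c(x) + J(x)v‖ < hmax` and the quasi-tangential step satisfies
`‖J(x)t‖ ≤ κ₁(hmax - ‖c(x) + J(x)v‖)`, then any step size `α ∈ (0,1]` with
`α L ‖d‖² ≤ (1-κ₁)(hmax - ‖c(x) + J(x)v‖)` keeps the new infeasibility within the funnel:
`‖c(x + αd)‖ ≤ hmax`. -/
theorem funnel_bound_preserved_f_iteration
    (n m : ℕ) (Ω : Set (EuclideanSpace ℝ (Fin n))) (hΩ : IsOpen Ω) (hconv : Convex ℝ Ω)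
    (c : EuclideanSpace ℝ (Fin n) → EuclideanSpace ℝ (Fin m))
    (hdiff : DifferentiableOn ℝ c Ω) (L : ℝ) (hL : 0 < L)
    (hLip : ∀ y ∈ Ω, ∀ z ∈ Ω, ‖fderiv ℝ c y - fderiv ℝ c z‖ ≤ L * ‖y - z‖)
    (x : EuclideanSpace ℝ (Fin n)) (hx : x ∈ Ω)
    (v t d : EuclideanSpace ℝ (Fin n)) (hd : d = v + t)
    (hmax κ₁ : ℝ) (hhmax : 0 < hmax) (hκ₁ : κ₁ ∈ Set.Ioo (0 : ℝ) 1)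
    (h1 : ‖c x‖ ≤ hmax)
    (h2 : ‖c x + fderiv ℝ c x v‖ < hmax)
    (h3 : ‖fderiv ℝ c x t‖ ≤ κ₁ * (hmax - ‖c x + fderiv ℝ c x v‖)) :
    ∀ α : ℝ, 0 < α → α ≤ 1 → x + α • d ∈ Ω →
      α * L * ‖d‖ ^ 2 ≤ (1 - κ₁) * (hmax - ‖c x + fderiv ℝ c x v‖) →
      ‖c (x + α • d)‖ ≤ hmax := by
  intro α hα0 hα1 hxin hstep
  set J := fderiv ℝ c x with hJ
  -- g y = c y - J y has derivative J(y) - J(x)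
  set g : EuclideanSpace ℝ (Fin n) → EuclideanSpace ℝ (Fin m) :=
    fun y => c y - J y with hg
  set s : Set (EuclideanSpace ℝ (Fin n)) := segment ℝ x (x + α • d) with hs
  have hsΩ : s ⊆ Ω := hconv.segment_subset hx hxin
  have hdiffat : ∀ y ∈ Ω, DifferentiableAt ℝ c y := fun y hy =>
    (hdiff y hy).differentiableAt (hΩ.mem_nhds hy)
  have hgdiff : ∀ y ∈ s, DifferentiableAt ℝ g y := fun y hy =>
    (hdiffat y (hsΩ hy)).sub (J.differentiable.differentiableAt)
  have hgderiv : ∀ y ∈ s, fderiv ℝ g y = fderiv ℝ c y - J := by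
    intro y hy
    have := fderiv_fun_sub (hdiffat y (hsΩ hy)) (J.differentiable.differentiableAt)
    rw [hg] at *
    simpa [ContinuousLinearMap.fderiv] using this
  have hCbound : ∀ y ∈ s, ‖fderiv ℝ g y‖ ≤ L * (α * ‖d‖) := by
    intro y hy
    rw [hgderiv y hy]
    calc ‖fderiv ℝ c y - J‖ ≤ L * ‖y - x‖ := hLip y (hsΩ hy) x hx
      _ ≤ L * (α * ‖d‖) := by
        apply mul_le_mul_of_nonneg_left _ hL.le
        obtain ⟨a, b, ha, hb, hab, hy'⟩ := hy
        have : y - x = (b * α) • d := by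
          rw [← hy']
          have : a • x + b • (x + α • d) = x + (b * α) • d := by
            rw [smul_add, ← add_assoc, ← add_smul, hab, one_smul, smul_smul]
          rw [this]; abel
        rw [this, norm_smul, Real.norm_of_nonneg (by positivity)]
        have hbα : b * α ≤ α := by nlinarith
        exact mul_le_mul_of_nonneg_right hbα (norm_nonneg d)
  have hxs : x ∈ s := left_mem_segment ℝ _ _
  have hxd : x + α • d ∈ s := right_mem_segment ℝ _ _
  have hconvs : Convex ℝ s := convex_segment _ _
  have key : ‖g (x + α • d) - g x‖ ≤ L * (α * ‖d‖) * ‖(x + α • d) - x‖ :=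
    hconvs.norm_image_sub_le_of_norm_fderiv_le hgdiff hCbound hxs hxd
  have hnorm : ‖(x + α • d) - x‖ = α * ‖d‖ := by
    have : (x + α • d) - x = α • d := by abel
    rw [this, norm_smul, Real.norm_of_nonneg hα0.le]
  rw [hnorm] at key
  have hgsplit : c (x + α • d) = (g (x + α • d) - g x) + (c x + J (α • d)) := by
    simp [hg, map_add]
    abel
  set A := ‖c x + J v‖ with hA
  have hsplit2 : c x + J (α • d) = (1 - α) • c x + α • (c x + J v) + α • (J t) := by
    rw [hd]
    simp only [map_smul, map_add]
    module
  have hbound2 : ‖c x + J (α • d)‖ ≤ (1 - α) * hmax + α * A + α * (κ₁ * (hmax - A)) := by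
    rw [hsplit2]
    refine le_trans (norm_add_le _ _) ?_
    gcongr
    refine le_trans (norm_add_le _ _) ?_
    gcongr
    · rw [norm_smul, Real.norm_of_nonneg (by linarith)]
      exact mul_le_mul_of_nonneg_left h1 (by linarith)
    · rw [norm_smul, Real.norm_of_nonneg hα0.le]
    · rw [norm_smul, Real.norm_of_nonneg hα0.le]
      exact mul_le_mul_of_nonneg_left h3 hα0.le
  have hquad : L * (α * ‖d‖) * (α * ‖d‖) ≤ α * ((1 - κ₁) * (hmax - A)) := by
    have : L * (α * ‖d‖) * (α * ‖d‖) = α * (α * L * ‖d‖ ^ 2) := by ring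
    rw [this]
    exact mul_le_mul_of_nonneg_left hstep hα0.le
  calc ‖c (x + α • d)‖ = ‖(g (x + α • d) - g x) + (c x + J (α • d))‖ := by rw [hgsplit]
    _ ≤ ‖g (x + α • d) - g x‖ + ‖c x + J (α • d)‖ := norm_add_le _ _
    _ ≤ α * ((1 - κ₁) * (hmax - A)) + ((1 - α) * hmax + α * A + α * (κ₁ * (hmax - A))) := by
        have := key.trans hquad
        linarith
    _ = hmax := by ring
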